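/- Let r ≥ 1, n ≥ 1 and let X ∈ M_r(ℂ) be invertible with pairwise distinct eigenvalues λ_1, …, λ_r (so the characteristic polynomial of X factors over ℂ as ∏_{i=1}^r (t − λ_i)). Then the determinant of the linear endomorphism of M_r(ℂ) given by H ↦ ∑_{k=0}^{n−1} X^k · H · X^{n−1−k} equals n^r · (det X)^{n−1} · ∏_{1 ≤ i < j ≤ r} ((λ_i^n − λ_j^n)/(λ_i − λ_j))². -/

import Mathlib

open Polynomial Finset


lemma aux_det_scaling {r : ℕ} (μ : Fin r → Fin r → ℂ)
    (g : Matrix (Fin r) (Fin r) ℂ →ₗ[ℂ] Matrix (Fin r) (Fin r) ℂ)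
    (hg : ∀ H, g H = Matrix.of fun i j => μ i j * H i j) :
    LinearMap.det g = ∏ i, ∏ j, μ i j := by
  classical
  let b := Matrix.stdBasis ℂ (Fin r) (Fin r)
  have hb : ∀ q : Fin r × Fin r, g (b q) = μ q.1 q.2 • b q := by
    rintro ⟨q1, q2⟩
    rw [hg]
    ext i j
    simp only [Matrix.of_apply, Matrix.smul_apply, smul_eq_mul, b,
      Matrix.stdBasis_eq_single, Matrix.single]
    by_cases h1 : q1 = i <;> by_cases h2 : q2 = j <;> simp [h1, h2]
  have hmat : LinearMap.toMatrix b b g = Matrix.diagonal (fun p => μ p.1 p.2) := by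
    ext p q
    rw [LinearMap.toMatrix_apply, hb, map_smul, Module.Basis.repr_self]
    by_cases h : p = q <;>
      simp [h, Matrix.diagonal, Finsupp.single_apply, eq_comm]
  rw [← LinearMap.det_toMatrix b, hmat, Matrix.det_diagonal, Fintype.prod_prod_type]

lemma aux_eigen {r : ℕ} (X : Matrix (Fin r) (Fin r) ℂ) (c : ℂ)
    (h : X.charpoly.eval c = 0) :
    ∃ v : Fin r → ℂ, v ≠ 0 ∧ X.mulVec v = c • v := by
  have hdet : (Matrix.diagonal (fun _ : Fin r => c) - X).det = 0 := by
    have := RingHom.map_det (evalRingHom c) (Matrix.charmatrix X)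
    rw [← Matrix.charpoly] at this
    have hmap : (RingHom.mapMatrix (evalRingHom c)) (Matrix.charmatrix X)
        = Matrix.diagonal (fun _ : Fin r => c) - X := by
      ext i j
      by_cases hij : i = j <;>
        simp [Matrix.charmatrix_apply, hij, Matrix.diagonal_apply]
    rw [hmap] at this
    rw [← this]
    simpa using h
  obtain ⟨v, hv0, hv⟩ := (Matrix.exists_mulVec_eq_zero_iff).2 hdet
  refine ⟨v, hv0, ?_⟩
  rw [Matrix.sub_mulVec] at hv
  have hd : (Matrix.diagonal (fun _ : Fin r => c)).mulVec v = c • v := by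
    ext i; simp [Matrix.mulVec_diagonal]
  rw [hd] at hv
  have := sub_eq_zero.mp hv
  exact this.symm

lemma aux_diag {r : ℕ} (hr : 1 ≤ r) (v : Fin r → Fin r → ℂ)
    (X : Matrix (Fin r) (Fin r) ℂ) (lam : Fin r → ℂ)
    (hdist : Function.Injective lam)
    (hv0 : ∀ i, v i ≠ 0) (hvec : ∀ i, X.mulVec (v i) = lam i • v i) :
    ∃ u : (Matrix (Fin r) (Fin r) ℂ)ˣ,
      X = (u : Matrix (Fin r) (Fin r) ℂ) * Matrix.diagonal lam * ((u⁻¹ : _ˣ) : Matrix (Fin r) (Fin r) ℂ) := by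
  classical
  have : Nonempty (Fin r) := ⟨⟨0, hr⟩⟩
  have li : LinearIndependent ℂ v := by
    apply Module.End.eigenvectors_linearIndependent' (X.mulVecLin) lam hdist v
    intro i
    exact ⟨Module.End.mem_eigenspace_iff.2 (by simpa using hvec i), hv0 i⟩
  have card_eq : Fintype.card (Fin r) = Module.finrank ℂ (Fin r → ℂ) := by simp
  let B := basisOfLinearIndependentOfCardEqFinrank li card_eq
  have hB : ⇑B = v := coe_basisOfLinearIndependentOfCardEqFinrank li card_eq
  let P := (Pi.basisFun ℂ (Fin r)).toMatrix ⇑B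
  have : Invertible P := (Pi.basisFun ℂ (Fin r)).invertibleToMatrix B
  let u : (Matrix (Fin r) (Fin r) ℂ)ˣ := unitOfInvertible P
  have hP : ∀ a i, P a i = v i a := by
    intro a i
    simp [P, Module.Basis.toMatrix_apply, hB]
  have hXP : X * P = P * Matrix.diagonal lam := by
    ext a i
    rw [Matrix.mul_apply, Matrix.mul_diagonal]
    have : ∑ k, X a k * P k i = X.mulVec (v i) a := by
      simp [Matrix.mulVec, dotProduct, hP]
    rw [this, hvec i, Pi.smul_apply, smul_eq_mul, hP, mul_comm]
  refine ⟨u, ?_⟩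
  have hu : (↑u : Matrix (Fin r) (Fin r) ℂ) = P := rfl
  calc X = X * ↑u * ↑u⁻¹ := (Units.mul_inv_cancel_right X u).symm
    _ = _ := by rw [hu, hXP]

lemma aux_conj {r n : ℕ} (U V D : Matrix (Fin r) (Fin r) ℂ)
    (hUV : U * V = 1) (hVU : V * U = 1)
    (f g : Matrix (Fin r) (Fin r) ℂ →ₗ[ℂ] Matrix (Fin r) (Fin r) ℂ)
    (hf : ∀ H, f H = ∑ k ∈ Finset.range n,
      (U * D * V) ^ k * H * (U * D * V) ^ (n - 1 - k))
    (hg : ∀ H, g H = ∑ k ∈ Finset.range n, D ^ k * H * D ^ (n - 1 - k)) :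
    LinearMap.det f = LinearMap.det g := by
  have hpow : ∀ k : ℕ, (U * D * V) ^ k = U * D ^ k * V := by
    intro k
    induction k with
    | zero => simp [hUV]
    | succ k ih =>
      rw [pow_succ, ih, pow_succ]
      calc U * D ^ k * V * (U * D * V) = U * D ^ k * (V * U) * D * V := by
            noncomm_ring
        _ = U * (D ^ k * D) * V := by rw [hVU]; noncomm_ring
  let el : Matrix (Fin r) (Fin r) ℂ →ₗ[ℂ] Matrix (Fin r) (Fin r) ℂ :=
    (LinearMap.mulRight ℂ V).comp (LinearMap.mulLeft ℂ U)
  let el' : Matrix (Fin r) (Fin r) ℂ →ₗ[ℂ] Matrix (Fin r) (Fin r) ℂ :=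
    (LinearMap.mulRight ℂ U).comp (LinearMap.mulLeft ℂ V)
  have hcomp1 : ∀ H, el (el' H) = H := by
    intro H
    simp only [el, el', LinearMap.comp_apply, LinearMap.mulRight_apply,
      LinearMap.mulLeft_apply]
    calc U * (V * H * U) * V = (U * V) * H * (U * V) := by noncomm_ring
      _ = H := by rw [hUV]; noncomm_ring
  have hcomp2 : ∀ H, el' (el H) = H := by
    intro H
    simp only [el, el', LinearMap.comp_apply, LinearMap.mulRight_apply,
      LinearMap.mulLeft_apply]
    calc V * (U * H * V) * U = (V * U) * H * (V * U) := by noncomm_ring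
      _ = H := by rw [hVU]; noncomm_ring
  let e : Matrix (Fin r) (Fin r) ℂ ≃ₗ[ℂ] Matrix (Fin r) (Fin r) ℂ :=
    LinearEquiv.ofLinear el el' (LinearMap.ext hcomp1) (LinearMap.ext hcomp2)
  have hfe : f = (e : _ →ₗ[ℂ] _) ∘ₗ g ∘ₗ (e.symm : _ →ₗ[ℂ] _) := by
    apply LinearMap.ext
    intro H
    have hesymm : e.symm H = V * H * U := rfl
    simp only [LinearMap.comp_apply, LinearEquiv.coe_coe, hesymm]
    rw [hf, hg]
    have he : ∀ M, e M = U * M * V := fun _ => rfl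
    rw [he, Finset.mul_sum, Finset.sum_mul]
    refine Finset.sum_congr rfl fun k _ => ?_
    rw [hpow, hpow]
    noncomm_ring
  rw [hfe, LinearMap.det_conj]

lemma aux_prod {r n : ℕ} (hn : 1 ≤ n) (lam : Fin r → ℂ)
    (hdist : Function.Injective lam) (μ : Fin r → Fin r → ℂ)
    (hμ : ∀ i j, μ i j = ∑ k ∈ Finset.range n, lam i ^ k * lam j ^ (n - 1 - k)) :
    (∏ i : Fin r, ∏ j : Fin r, μ i j)
      = (n : ℂ) ^ r * (∏ i : Fin r, lam i) ^ (n - 1) *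
        ∏ i : Fin r, ∏ j ∈ Finset.Ioi i,
          ((lam i ^ n - lam j ^ n) / (lam i - lam j)) ^ 2 := by
  have hdiag : ∀ i, μ i i = (n : ℂ) * lam i ^ (n - 1) := by
    intro i
    rw [hμ]
    have h2 : ∀ k ∈ Finset.range n, lam i ^ k * lam i ^ (n - 1 - k) = lam i ^ (n - 1) := by
      intro k hk
      rw [Finset.mem_range] at hk
      rw [← pow_add]
      congr 1
      omega
    rw [Finset.sum_congr rfl h2, Finset.sum_const, Finset.card_range, nsmul_eq_mul]
  have hsym : ∀ i j, μ j i = μ i j := by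
    intro i j
    rw [hμ, hμ, ← Finset.sum_range_reflect]
    refine Finset.sum_congr rfl fun k hk => ?_
    rw [Finset.mem_range] at hk
    have h1 : n - 1 - (n - 1 - k) = k := by omega
    rw [h1, mul_comm]
  have hij : ∀ i j, i ≠ j → μ i j = (lam i ^ n - lam j ^ n) / (lam i - lam j) := by
    intro i j hne
    have hne' : lam i - lam j ≠ 0 := sub_ne_zero.2 fun h => hne (hdist h)
    rw [eq_div_iff hne', hμ]
    exact geom_sum₂_mul (lam i) (lam j) n
  calc (∏ i : Fin r, ∏ j : Fin r, μ i j)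
      = ∏ i : Fin r, (μ i i * ∏ j ∈ ({i}ᶜ : Finset (Fin r)), μ i j) := by
        refine Finset.prod_congr rfl fun i _ => ?_
        rw [Finset.compl_singleton, Finset.mul_prod_erase _ _ (Finset.mem_univ i)]
    _ = (∏ i : Fin r, μ i i) * ∏ i : Fin r, ∏ j ∈ ({i}ᶜ : Finset (Fin r)), μ i j := by
        rw [Finset.prod_mul_distrib]
    _ = (n : ℂ) ^ r * (∏ i : Fin r, lam i) ^ (n - 1) *
          ∏ i : Fin r, ∏ j ∈ Finset.Ioi i,
            ((lam i ^ n - lam j ^ n) / (lam i - lam j)) ^ 2 := by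
        congr 1
        · rw [Finset.prod_congr rfl fun i _ => hdiag i, Finset.prod_mul_distrib,
            Finset.prod_const, Finset.prod_pow]
          simp
        · have := Finset.prod_prod_Ioi_mul_eq_prod_prod_off_diag (fun a b => μ b a)
          have h2 : (∏ i : Fin r, ∏ j ∈ Finset.Ioi i, μ i j * μ j i)
              = ∏ i : Fin r, ∏ j ∈ Finset.Ioi i,
                  ((lam i ^ n - lam j ^ n) / (lam i - lam j)) ^ 2 := by
            refine Finset.prod_congr rfl fun i _ => Finset.prod_congr rfl fun j hj => ?_
            have hne : i ≠ j := ne_of_lt (Finset.mem_Ioi.1 hj)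
            rw [hsym i j, ← sq, hij i j hne]
          rw [← h2]
          convert this.symm using 2 with i


/-- For invertible `X ∈ M_r(ℂ)` with pairwise distinct
eigenvalues `λ_1, …, λ_r`, the determinant of the endomorphism
`H ↦ ∑_{k<n} X^k H X^{n-1-k}` of `M_r(ℂ)` equals
`n^r (det X)^{n-1} ∏_{i<j} ((λ_i^n − λ_j^n)/(λ_i − λ_j))²`. -/
theorem stmt_13 (r : ℕ) (hr : 1 ≤ r) (n : ℕ) (hn : 1 ≤ n)
    (X : Matrix (Fin r) (Fin r) ℂ) (hX : IsUnit X.det) (lam : Fin r → ℂ)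
    (hchar : X.charpoly = ∏ i : Fin r, (Polynomial.X - Polynomial.C (lam i)))
    (hdist : Function.Injective lam)
    (f : Matrix (Fin r) (Fin r) ℂ →ₗ[ℂ] Matrix (Fin r) (Fin r) ℂ)
    (hf : ∀ H : Matrix (Fin r) (Fin r) ℂ,
      f H = ∑ k ∈ Finset.range n, X ^ k * H * X ^ (n - 1 - k)) :
    LinearMap.det f =
      (n : ℂ) ^ r * X.det ^ (n - 1) *
        ∏ i : Fin r, ∏ j ∈ Finset.Ioi i,
          ((lam i ^ n - lam j ^ n) / (lam i - lam j)) ^ 2 := by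
  classical
  -- determinant of X is the product of the eigenvalues
  have hdetX : X.det = ∏ i : Fin r, lam i := by
    rw [Matrix.det_eq_sign_charpoly_coeff, Polynomial.coeff_zero_eq_eval_zero, hchar,
      Polynomial.eval_prod]
    simp only [Polynomial.eval_sub, Polynomial.eval_X, Polynomial.eval_C, zero_sub]
    have hneg : ∀ x : Fin r, -lam x = (-1 : ℂ) * lam x := fun x => by ring
    rw [Finset.prod_congr rfl fun x _ => hneg x, Finset.prod_mul_distrib, Finset.prod_const,
      ← mul_assoc]
    norm_num [← mul_pow]
  -- each lam i is a root of the characteristic polynomial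
  have hroot : ∀ i, X.charpoly.eval (lam i) = 0 := by
    intro i
    rw [hchar, Polynomial.eval_prod]
    exact Finset.prod_eq_zero (Finset.mem_univ i) (by simp)
  choose v hv0 hvec using fun i => aux_eigen X (lam i) (hroot i)
  obtain ⟨u, hXu⟩ := aux_diag hr v X lam hdist hv0 hvec
  set D : Matrix (Fin r) (Fin r) ℂ := Matrix.diagonal lam with hD
  let g : Matrix (Fin r) (Fin r) ℂ →ₗ[ℂ] Matrix (Fin r) (Fin r) ℂ :=
    ∑ k ∈ Finset.range n,
      (LinearMap.mulRight ℂ (D ^ (n - 1 - k))).comp (LinearMap.mulLeft ℂ (D ^ k))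
  have hg : ∀ H, g H = ∑ k ∈ Finset.range n, D ^ k * H * D ^ (n - 1 - k) := by
    intro H
    simp [g, LinearMap.sum_apply, Matrix.mul_assoc]
  have hf' : ∀ H, f H = ∑ k ∈ Finset.range n,
      ((u : Matrix (Fin r) (Fin r) ℂ) * D * ((u⁻¹ : _ˣ) : Matrix (Fin r) (Fin r) ℂ)) ^ k * H *
      ((u : Matrix (Fin r) (Fin r) ℂ) * D * ((u⁻¹ : _ˣ) : Matrix (Fin r) (Fin r) ℂ)) ^ (n - 1 - k) := by
    intro H
    rw [hf, ← hXu]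
  have hdetfg := aux_conj (u : Matrix (Fin r) (Fin r) ℂ)
    ((u⁻¹ : _ˣ) : Matrix (Fin r) (Fin r) ℂ) D u.mul_inv u.inv_mul f g hf' hg
  have hgform : ∀ H, g H = Matrix.of fun i j =>
      (∑ k ∈ Finset.range n, lam i ^ k * lam j ^ (n - 1 - k)) * H i j := by
    intro H
    rw [hg]
    ext i j
    rw [Matrix.sum_apply, Matrix.of_apply, Finset.sum_mul]
    refine Finset.sum_congr rfl fun k _ => ?_
    rw [hD, Matrix.diagonal_pow, Matrix.diagonal_pow, Matrix.mul_apply]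
    simp [Matrix.mul_diagonal, Matrix.diagonal_apply, Finset.sum_ite_eq, mul_comm, mul_assoc,
      mul_left_comm]
  have hdetg := aux_det_scaling _ g hgform
  rw [hdetfg, hdetg, aux_prod hn lam hdist _ (fun i j => rfl), hdetX]
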